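/- Let H_1,…,H_k be pairwise non-isomorphic hypergraphs and let c_1,…,c_k be nonzero rational constants. There exist hypergraphs F_1,…,F_k, depending only on H_1,…,H_k and c_1,…,c_k, and an invertible k × k rational matrix M with M_{i,j} = c_j · Hom(F_i, H_j), such that for every hypergraph G, setting G_j = G ⊗ F_j for each j ∈ {1,…,k}, one has Σ_{i=1}^k c_i · Hom(G_j, H_i) = Σ_{i=1}^k M_{j,i} · Hom(G, H_i) for every j; consequently the k numbers Hom(G, H_1),…,Hom(G, H_k) are uniquely determined by the k numbers Σ_{i=1}^k c_i · Hom(G_j, H_i), j = 1,…,k. -/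

import Mathlib

open scoped Classical

noncomputable section

/-- A hypergraph: a finite vertex set and a finite set of hyperedges, with vertices in `ℕ`. -/
structure HGraph where
  verts : Finset ℕ
  edges : Finset (Finset ℕ)

namespace HGraph

/-- Well-formedness: every hyperedge is a nonempty subset of the vertex set. -/
def Good (G : HGraph) : Prop := ∀ e ∈ G.edges, e ⊆ G.verts ∧ e.Nonempty

/-- The rank of a hypergraph: the maximum arity of a hyperedge. -/
def rank (G : HGraph) : ℕ := G.edges.sup Finset.card

/-- The induced `l`-trimmed subhypergraph of `G` on `S`. -/
def trim (G : HGraph) (S : Finset ℕ) (l : ℕ∞) : HGraph :=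
  ⟨G.verts ∩ S,
    (G.edges.filter fun e => ((e \ S).card : ℕ∞) ≤ l ∧ (e ∩ S).Nonempty).image fun e => e ∩ S⟩

/-- The degree of a vertex: the number of hyperedges containing it. -/
def degree (G : HGraph) (v : ℕ) : ℕ := (G.edges.filter fun e => v ∈ e).card

/-- The `l`-degeneracy of a hypergraph: the least `κ` such that every nonempty induced
`l`-trimmed subhypergraph has a vertex of degree at most `κ`. -/
def degeneracy (G : HGraph) (l : ℕ∞) : ℕ :=
  sInf {κ : ℕ | ∀ S ⊆ G.verts, S.Nonempty → ∃ v ∈ S, (G.trim S l).degree v ≤ κ}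

/-- Two vertices are adjacent if some hyperedge contains both. -/
def Adj (G : HGraph) (u v : ℕ) : Prop := ∃ e ∈ G.edges, u ∈ e ∧ v ∈ e

/-- A hypergraph is connected if any two vertices are joined by a path of adjacencies. -/
def Connected (G : HGraph) : Prop :=
  ∀ u ∈ G.verts, ∀ v ∈ G.verts, Relation.ReflTransGen G.Adj u v

/-- `D` is a connected component of `G`. -/
def IsComponent (G : HGraph) (D : Finset ℕ) : Prop :=
  ∃ v ∈ G.verts, D = G.verts.filter fun u => Relation.ReflTransGen G.Adj v u

/-- The induced subhypergraph (only hyperedges entirely inside `S`). -/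
def induce (G : HGraph) (S : Finset ℕ) : HGraph :=
  ⟨G.verts ∩ S, G.edges.filter fun e => e ⊆ S⟩

end HGraph

/-- `f` is a homomorphism from `H` to `G`. -/
def IsHom (H G : HGraph) (f : ℕ → ℕ) : Prop :=
  (∀ v ∈ H.verts, f v ∈ G.verts) ∧ ∀ e ∈ H.edges, e.image f ∈ G.edges

/-- `Hom(G,H)`: the number of homomorphisms from `H` to `G`
(normalized to be `0` off `V(H)` so that the set is finite). -/
def homCount (G H : HGraph) : ℕ :=
  Set.ncard {f : ℕ → ℕ | IsHom H G f ∧ ∀ v ∉ H.verts, f v = 0}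

/-- `Homr(G,H)`: the number of arity-preserving homomorphisms from `H` to `G`. -/
def homrCount (G H : HGraph) : ℕ :=
  Set.ncard {f : ℕ → ℕ | IsHom H G f ∧ (∀ e ∈ H.edges, (e.image f).card = e.card) ∧
    ∀ v ∉ H.verts, f v = 0}

/-- HGraph isomorphism. -/
def Isomorphic (H H' : HGraph) : Prop :=
  ∃ f : ℕ → ℕ, Set.BijOn f ↑H.verts ↑H'.verts ∧
    H'.edges = H.edges.image fun e => e.image f

/-- The quotient of `H` under the partition of `V(H)` into the fibers of `f`. -/
def quotientBy (H : HGraph) (f : ℕ → ℕ) : HGraph :=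
  ⟨H.verts.image f, H.edges.image fun e => e.image f⟩

/-- `H'` is a quotient of `H` (by some partition of `V(H)`). -/
def IsQuotient (H H' : HGraph) : Prop := ∃ f : ℕ → ℕ, H' = quotientBy H f

/-- Each fiber of `f` induces a connected (trimmed) subhypergraph of `H`. -/
def ContractMap (H : HGraph) (f : ℕ → ℕ) : Prop :=
  ∀ w : ℕ, (H.trim (H.verts.filter fun v => f v = w) ⊤).Connected

/-- `H'` belongs to the contract set `Q^c(H)`: it is a quotient of `H` by a partition
all of whose parts induce connected subhypergraphs of `H`. -/
def IsContractQuotient (H H' : HGraph) : Prop :=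
  ∃ f : ℕ → ℕ, ContractMap H f ∧ H' = quotientBy H f

/-- `α(H')`: the number of partitions `τ` of `V(H)` with connected parts with `H/τ ≅ H'`. -/
def alphaCount (H H' : HGraph) : ℕ :=
  Set.ncard {P : Finset (Finset ℕ) | ∃ f : ℕ → ℕ, ContractMap H f ∧
    Isomorphic (quotientBy H f) H' ∧
    P = (H.verts.image f).image fun w => H.verts.filter fun v => f v = w}

/-- `|Aut(H')|`: the number of automorphisms of `H'`. -/
def autCount (H' : HGraph) : ℕ :=
  Set.ncard {f : ℕ → ℕ | (∀ v ∉ H'.verts, f v = v) ∧ Set.BijOn f ↑H'.verts ↑H'.verts ∧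
    H'.edges.image (fun e => e.image f) = H'.edges}

/-- The arc relation of the `l`-skeleton of the DAH obtained by ordering `G` by `π`. -/
def SkelArc (G : HGraph) (π : ℕ → ℕ) (l : ℕ∞) (u v : ℕ) : Prop :=
  ∃ e ∈ G.edges, u ∈ e ∧ v ∈ e ∧ π u < π v ∧
    ((e.filter fun w => π w < π u).card : ℕ∞) ≤ l

/-- The `l`-outdegree of a vertex in the DAH `(G, π)`. -/
def loutdeg (G : HGraph) (π : ℕ → ℕ) (l : ℕ∞) (u : ℕ) : ℕ :=
  (G.verts.filter fun v => SkelArc G π l u v).card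

/-- Vertices reachable from `v` by a directed path. -/
def Reach (Adj : ℕ → ℕ → Prop) (v : ℕ) : Set ℕ := {u | Relation.ReflTransGen Adj v u}

/-- Vertices reachable from a set `A`. -/
def ReachSet (Adj : ℕ → ℕ → Prop) (A : Set ℕ) : Set ℕ :=
  {u | ∃ a ∈ A, Relation.ReflTransGen Adj a u}

/-- The sources of a DAG: vertices with no incoming arc. -/
def sourcesOf (V : Finset ℕ) (Adj : ℕ → ℕ → Prop) : Finset ℕ :=
  V.filter fun v => ¬ ∃ u ∈ V, Adj u v

/-- `b` lies on the (unique) path between `i` and `j` in `T`. -/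
def OnPath {n : ℕ} (T : SimpleGraph (Fin n)) (i j b : Fin n) : Prop :=
  ∃ p : T.Walk i j, p.IsPath ∧ b ∈ p.support

/-- `(T, β)` is a DAG-tree decomposition of the DAG `(V, Adj)`. -/
def IsDTD (V : Finset ℕ) (Adj : ℕ → ℕ → Prop) {n : ℕ}
    (T : SimpleGraph (Fin n)) (β : Fin n → Finset ℕ) : Prop :=
  T.IsTree ∧ (∀ i, β i ⊆ sourcesOf V Adj) ∧ (∀ s ∈ sourcesOf V Adj, ∃ i, s ∈ β i) ∧
    ∀ i j b, OnPath T i j b →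
      ReachSet Adj ↑(β i) ∩ ReachSet Adj ↑(β j) ⊆ ReachSet Adj ↑(β b)

/-- The DAG-treewidth of the DAG `(V, Adj)`. -/
def dagTreewidth (V : Finset ℕ) (Adj : ℕ → ℕ → Prop) : ℕ :=
  sInf {w : ℕ | ∃ (n : ℕ) (T : SimpleGraph (Fin n)) (β : Fin n → Finset ℕ),
    IsDTD V Adj T β ∧ ∀ i, (β i).card ≤ w}

/-- The `l`-DAG-treewidth of the DAH `(H, π)`. -/
def ldtwOriented (H : HGraph) (π : ℕ → ℕ) (l : ℕ∞) : ℕ :=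
  dagTreewidth H.verts (SkelArc H π l)

/-- The `l`-DAG-treewidth of an undirected hypergraph:
the maximum over all acyclic orientations. -/
def ldtw (H : HGraph) (l : ℕ∞) : ℕ :=
  sSup {w : ℕ | ∃ π : ℕ → ℕ, Set.InjOn π ↑H.verts ∧ w = ldtwOriented H π l}

/-- `f` is a DAH homomorphism from `(K, πK)` to `(G, πG)`. -/
def IsDAHHom (K : HGraph) (πK : ℕ → ℕ) (G : HGraph) (πG : ℕ → ℕ)
    (f : ℕ → ℕ) : Prop :=
  (∀ v ∈ K.verts, f v ∈ G.verts) ∧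
    ∀ e ∈ K.edges, e.image f ∈ G.edges ∧
      ∀ u ∈ e, ∀ v ∈ e, πK u < πK v → πG (f u) < πG (f v)

/-- The number of DAH homomorphisms from `(K, πK)` to `(G, πG)`. -/
def dahHomCount (G : HGraph) (πG : ℕ → ℕ) (K : HGraph) (πK : ℕ → ℕ) : ℕ :=
  Set.ncard {f : ℕ → ℕ | IsDAHHom K πK G πG f ∧ ∀ v ∉ K.verts, f v = 0}

/-- Two orderings of `H` give isomorphic acyclic orientations. -/
def OrientIso (H : HGraph) (π₁ π₂ : ℕ → ℕ) : Prop :=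
  ∃ g : ℕ → ℕ, Set.BijOn g ↑H.verts ↑H.verts ∧
    (H.edges.image fun e => e.image g) = H.edges ∧
    ∀ u ∈ H.verts, ∀ v ∈ H.verts, (π₁ u < π₁ v ↔ π₂ (g u) < π₂ (g v))

/-- The vertices of `H` that are `l`-reachable from the set `S` in the DAH `(H, π)`. -/
def reachClosure (H : HGraph) (π : ℕ → ℕ) (l : ℕ∞) (S : Set ℕ) : Finset ℕ :=
  H.verts.filter fun v => v ∈ ReachSet (SkelArc H π l) S

/-- `H⃗[S]_l`: the sub-DAH induced (0-trimmed) on the vertices `l`-reachable from `S`. -/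
def subDAH (H : HGraph) (π : ℕ → ℕ) (l : ℕ∞) (S : Set ℕ) : HGraph :=
  H.trim (reachClosure H π l S) 0

/-- `B'` is a child of `B` in the tree `T` rooted at `root`. -/
def IsChild {n : ℕ} (T : SimpleGraph (Fin n)) (root B B' : Fin n) : Prop :=
  T.Adj B B' ∧ OnPath T root B' B

/-- `Γ(B)`: the union of the bags in the subtree of `T` rooted at `B`. -/
def GammaSet {n : ℕ} (T : SimpleGraph (Fin n)) (root : Fin n)
    (β : Fin n → Finset ℕ) (B : Fin n) : Set ℕ :=
  {s | ∃ i, OnPath T root i B ∧ s ∈ β i}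

/-- `ext(φ, K⃗, G⃗)` relative to the agreement domain `dom`: the number of DAH homomorphisms
from `(K, πK)` to `(G, πG)` that agree with `φ` on `V(K) ∩ dom`. -/
def extCount (K : HGraph) (πK : ℕ → ℕ) (G : HGraph) (πG : ℕ → ℕ)
    (dom : Set ℕ) (φ : ℕ → ℕ) : ℕ :=
  Set.ncard {ψ : ℕ → ℕ | IsDAHHom K πK G πG ψ ∧ (∀ v ∉ K.verts, ψ v = 0) ∧
    ∀ v ∈ (↑K.verts : Set ℕ) ∩ dom, ψ v = φ v}

/-- The hyperedges `E_i` associated to a core `C` and a component `D`. -/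
def obstructionEdges (H : HGraph) (C D : Finset ℕ) : Finset (Finset ℕ) :=
  H.edges.filter fun e => e ⊆ C ∪ D ∧ 1 < e.card

/-- `H` is an `l`-obstruction (a member of `𝓗_l`). -/
def IsLObstruction (l : ℕ∞) (H : HGraph) : Prop :=
  ∃ k, 3 ≤ k ∧ ∃ C ⊆ H.verts, C.card = k ∧
    (∀ e ∈ (H.trim C l).edges, e.card ≤ 1) ∧
    (∀ D : Finset ℕ, (H.trim (H.verts \ C) ⊤).IsComponent D →
      ¬ C ⊆ (obstructionEdges H C D).biUnion id) ∧
    ∃ Dmap : ℕ → Finset ℕ, Set.InjOn Dmap ↑C ∧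
      ∀ c ∈ C, (H.trim (H.verts \ C) ⊤).IsComponent (Dmap c) ∧
        C.erase c ⊆ (obstructionEdges H C (Dmap c)).biUnion id ∧
        ∀ e ∈ obstructionEdges H C (Dmap c), c ∉ e

/-- `H` is `𝓗_l` ITS free: no induced ∞-trimmed subhypergraph is an `l`-obstruction. -/
def ITSFree (l : ℕ∞) (H : HGraph) : Prop :=
  ∀ S ⊆ H.verts, ¬ IsLObstruction l (H.trim S ⊤)

/-- The hypergraph `(Hv, He)` is an `l`-connector of `X ⊆ Hv`. -/
def IsConnector (l : ℕ∞) (Hv : Finset ℕ) (He : Finset (Finset ℕ)) (X : Finset ℕ) : Prop :=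
  X ⊆ Hv ∧ HGraph.Connected ⟨Hv, He⟩ ∧
    (∀ e ∈ He, 2 ≤ (e ∩ X).card → l < ((e \ X).card : ℕ∞)) ∧
    ∃ V' : Finset ℕ, (HGraph.trim ⟨Hv, He⟩ (Hv \ X) ⊤).IsComponent V' ∧
      ∀ xx ∈ X, ∃ v ∈ V', ∃ e ∈ He, xx ∈ e ∧ v ∈ e

/-- Witness data for membership of `H` in `𝓗_{l,k}`. -/
def InHlkWitness (l : ℕ∞) (k : ℕ) (H : HGraph)
    (x : ℕ → ℕ) (Vp : ℕ → Finset ℕ) (Ep : ℕ → Finset (Finset ℕ)) : Prop :=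
  Set.InjOn x ↑(Finset.range k) ∧
  (∀ i < k, ∀ j < k, i ≠ j → Disjoint (Vp i) (Vp j)) ∧
  (∀ i < k, Disjoint (Vp i) ((Finset.range k).image x)) ∧
  H.verts = (Finset.range k).image x ∪ (Finset.range k).biUnion Vp ∧
  (∀ i < k, ∀ j < k, i ≠ j → Disjoint (Ep i) (Ep j)) ∧
  H.edges = (Finset.range k).biUnion Ep ∧
  ∀ i < k,
    (∀ e ∈ Ep i, e ⊆ Vp i ∪ (((Finset.range k).image x).erase (x i))) ∧
    IsConnector l (Vp i ∪ (((Finset.range k).image x).erase (x i))) (Ep i)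
      (((Finset.range k).image x).erase (x i))

/-- `H ∈ 𝓗_{l,k}`. -/
def InHlk (l : ℕ∞) (k : ℕ) (H : HGraph) : Prop :=
  ∃ x Vp Ep, InHlkWitness l k H x Vp Ep

/-- The DAG `(V, Adj)` contains a `k`-reachable-cycle. -/
def HasReachCycle (V : Finset ℕ) (Adj : ℕ → ℕ → Prop) (k : ℕ) : Prop :=
  ∃ x y : ZMod k → ℕ, Function.Injective x ∧ Function.Injective y ∧
    (∀ i, x i ∈ V) ∧ (∀ i, y i ∈ V) ∧
    (∀ i, x i ∈ Reach Adj (y i) ∧ x (i + 1) ∈ Reach Adj (y i)) ∧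
    ∀ v ∈ V, 2 ≤ (Set.range x ∩ Reach Adj v).ncard →
      ∃ i, Set.range x ∩ Reach Adj v = {x i, x (i + 1)}

/-- `(x, y)` form a `k`-reachable-simplex in the DAG `(V, Adj)`. -/
def IsReachSimplexPair (V : Finset ℕ) (Adj : ℕ → ℕ → Prop) {k : ℕ}
    (x y : Fin k → ℕ) : Prop :=
  Function.Injective x ∧ Function.Injective y ∧
    (∀ i, x i ∈ V) ∧ (∀ i, y i ∈ V) ∧
    (∀ i j, j ≠ i → x j ∈ Reach Adj (y i)) ∧
    ¬ ∃ v ∈ V, ∀ i, x i ∈ Reach Adj v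

/-- The DAG `(V, Adj)` contains a `k`-reachable-simplex. -/
def HasReachSimplex (V : Finset ℕ) (Adj : ℕ → ℕ → Prop) (k : ℕ) : Prop :=
  ∃ x y : Fin k → ℕ, IsReachSimplexPair V Adj x y

/-- `F` is α-acyclic. -/
def IsAlphaAcyclic (F : HGraph) : Prop :=
  ∃ (n : ℕ) (T : SimpleGraph (Fin n)) (f : Fin n → Finset ℕ),
    T.IsTree ∧ Function.Injective f ∧ (∀ i, f i ∈ F.edges) ∧
    (∀ e ∈ F.edges, ∃ i, f i = e) ∧
    ∀ i j b, OnPath T i j b → f i ∩ f j ⊆ f b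

/-- The reachability hypergraph of the DAG `(V, Adj)`. -/
def reachHypergraph (V : Finset ℕ) (Adj : ℕ → ℕ → Prop) : HGraph :=
  ⟨V, (sourcesOf V Adj).image fun s => V.filter fun v => v ∈ Reach Adj s⟩

/-- The clique completion of a hypergraph. -/
def cliqueCompletion (H : HGraph) : SimpleGraph ℕ where
  Adj u v := u ≠ v ∧ ∃ e ∈ H.edges, u ∈ e ∧ v ∈ e
  symm := by
    constructor
    intro u v h
    obtain ⟨huv, e, he, hu, hv⟩ := h
    exact ⟨huv.symm, e, he, hv, hu⟩
  loopless := by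
    constructor
    intro u h
    exact h.1 rfl

/-- `G` has an induced cycle on `n` vertices. -/
def HasInducedCycle (G : SimpleGraph ℕ) (n : ℕ) : Prop :=
  ∃ f : ZMod n → ℕ, Function.Injective f ∧
    ∀ i j : ZMod n, G.Adj (f i) (f j) ↔ (j = i + 1 ∨ i = j + 1)

/-- The number of colorful homomorphisms from `H` to `G` under the coloring `c`
(with color set `{1, …, |V(H)|}`). -/
def colHomCount (G H : HGraph) (c : ℕ → ℕ) : ℕ :=
  Set.ncard {f : ℕ → ℕ | IsHom H G f ∧ (∀ v ∉ H.verts, f v = 0) ∧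
    Set.BijOn (fun v => c (f v)) ↑H.verts ↑(Finset.Icc 1 H.verts.card)}

/-- The tensor product of hypergraphs (vertex pairs encoded by `Nat.pair`). -/
def tensor (G H : HGraph) : HGraph :=
  ⟨(G.verts ×ˢ H.verts).image fun p => Nat.pair p.1 p.2,
    ((G.verts ×ˢ H.verts).image fun p => Nat.pair p.1 p.2).powerset.filter fun e =>
      (e.image fun m => (Nat.unpair m).1) ∈ G.edges ∧
      (e.image fun m => (Nat.unpair m).2) ∈ H.edges⟩

/-- `Sub(G,H)`: the number of subhypergraphs of `G` isomorphic to `H`. -/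
def subCount (G H : HGraph) : ℕ :=
  Set.ncard {p : Finset ℕ × Finset (Finset ℕ) |
    p.1 ⊆ G.verts ∧ (∀ e ∈ p.2, e ∈ G.edges ∧ e ⊆ p.1) ∧ Isomorphic H ⟨p.1, p.2⟩}

/-- Vertex renaming used in the construction of `G^H_l`:
core vertices go to the matching vertex of the colorful hyperedge `e` of `G`,
vertices of `H'` outside the core go to their fresh copy indexed by `e`, and
vertices outside `H'` go to their unique copy. -/
def liftVert (S X : Finset ℕ) (π c : ℕ → ℕ) (e : Finset ℕ) (v : ℕ) : ℕ :=
  if v ∈ X then Nat.pair 0 ((e.filter fun u => c u = π v).sum id)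
  else if v ∈ S then Nat.pair 2 (Nat.pair (Encodable.encode e) v)
  else Nat.pair 1 v

/-- The hypergraph `G^H_l` from the hardness construction. -/
def GHl (H G : HGraph) (S X : Finset ℕ) (Vp : ℕ → Finset ℕ) (π c : ℕ → ℕ)
    (k : ℕ) : HGraph :=
  ⟨(G.verts.image fun v => Nat.pair 0 v) ∪ ((H.verts \ S).image fun v => Nat.pair 1 v) ∪
      (Finset.range k).biUnion fun i =>
        (G.edges.filter fun e => e.card = k - 1 ∧ e.image c = (Finset.range k).erase i).biUnion
          fun e => (Vp i).image fun v => Nat.pair 2 (Nat.pair (Encodable.encode e) v),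
    ((H.edges.filter fun e => e ⊆ H.verts \ S).image fun e => e.image fun v => Nat.pair 1 v) ∪
      (Finset.range k).biUnion fun i =>
        (G.edges.filter fun e => e.card = k - 1 ∧ e.image c = (Finset.range k).erase i).biUnion
          fun e =>
            (H.edges.filter fun e' => ¬ e' ⊆ H.verts \ S ∧
                e' ⊆ X ∪ Vp i ∪ (H.verts \ S)).image
              fun e' => e'.image (liftVert S X π c e)⟩

/-- The coloring of `G^H_l`. -/
def GHlColor (π c : ℕ → ℕ) (m : ℕ) : ℕ :=
  if (Nat.unpair m).1 = 0 then c (Nat.unpair m).2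
  else if (Nat.unpair m).1 = 1 then π (Nat.unpair m).2
  else π (Nat.unpair (Nat.unpair m).2).2

/-- The grouping of the vertices of `G^H_l`: copied vertices first,
then the vertices of `G`, then the vertices of `V^ext`. -/
def GHlGroup (m : ℕ) : ℕ :=
  if (Nat.unpair m).1 = 2 then 0 else if (Nat.unpair m).1 = 0 then 1 else 2

-- ==================== auxiliary development ====================

/-- The set of (normalized) homomorphisms from `H` to `G`. -/
def homSet (G H : HGraph) : Set (ℕ → ℕ) :=
  {f : ℕ → ℕ | IsHom H G f ∧ ∀ v ∉ H.verts, f v = 0}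

lemma homCount_eq (G H : HGraph) : homCount G H = (homSet G H).ncard := rfl

lemma homSet_finite (G H : HGraph) : (homSet G H).Finite := by
  have h : Set.InjOn (fun f : ℕ → ℕ => fun v : ↥(↑H.verts : Set ℕ) => f v) (homSet G H) := by
    intro f hf g hg hfg
    funext v
    by_cases hv : v ∈ H.verts
    · exact congrFun hfg ⟨v, hv⟩
    · rw [hf.2 v hv, hg.2 v hv]
  refine Set.Finite.of_finite_image ?_ h
  have : ((fun f : ℕ → ℕ => fun v : ↥(↑H.verts : Set ℕ) => f v) '' homSet G H) ⊆
      Set.pi Set.univ (fun _ : ↥(↑H.verts : Set ℕ) => (↑G.verts : Set ℕ)) := by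
    rintro _ ⟨f, hf, rfl⟩ 
    intro v _
    exact hf.1.1 v v.2
  exact Set.Finite.subset (Set.Finite.pi fun _ => G.verts.finite_toSet) this

lemma ncard_prod {α β : Type*} (s : Set α) (t : Set β) :
    (s ×ˢ t).ncard = s.ncard * t.ncard := by
  rw [← Nat.card_coe_set_eq, ← Nat.card_coe_set_eq, ← Nat.card_coe_set_eq,
    Nat.card_congr (Equiv.Set.prod s t), Nat.card_prod]

lemma tensor_good {G F : HGraph} (hG : G.Good) (hF : F.Good) : (tensor G F).Good := by
  intro e he
  simp only [tensor, Finset.mem_filter, Finset.mem_powerset] at he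
  refine ⟨he.1, ?_⟩
  rcases Finset.eq_empty_or_nonempty e with rfl | h
  · exfalso
    have := (hG _ he.2.1).2
    simp at this
  · exact h

lemma homCount_tensor (G F H : HGraph) (hH : H.Good) :
    homCount (tensor G F) H = homCount G H * homCount F H := by
  rw [homCount_eq, homCount_eq, homCount_eq, ← ncard_prod]
  have key : homSet (tensor G F) H =
      (fun p : (ℕ → ℕ) × (ℕ → ℕ) => fun v => Nat.pair (p.1 v) (p.2 v)) ''
        ((homSet G H) ×ˢ (homSet F H)) := by
    ext f
    constructor
    · rintro ⟨⟨hv, he⟩, hz⟩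
      have h1 : (fun v => (Nat.unpair (f v)).1) ∈ homSet G H := by
        refine ⟨⟨?_, ?_⟩, ?_⟩
        · intro v hvH
          have := hv v hvH
          simp only [tensor, Finset.mem_image, Finset.mem_product] at this
          obtain ⟨p, hp, hpe⟩ := this
          show (Nat.unpair (f v)).1 ∈ G.verts
          rw [← hpe]; simpa using hp.1
        · intro e heH
          have := he e heH
          simp only [tensor, Finset.mem_filter, Finset.mem_powerset] at this
          have h2 := this.2.1
          rwa [Finset.image_image] at h2
        · intro v hvH
          simp [hz v hvH]
      have h2 : (fun v => (Nat.unpair (f v)).2) ∈ homSet F H := by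
        refine ⟨⟨?_, ?_⟩, ?_⟩
        · intro v hvH
          have := hv v hvH
          simp only [tensor, Finset.mem_image, Finset.mem_product] at this
          obtain ⟨p, hp, hpe⟩ := this
          show (Nat.unpair (f v)).2 ∈ F.verts
          rw [← hpe]; simpa using hp.2
        · intro e heH
          have := he e heH
          simp only [tensor, Finset.mem_filter, Finset.mem_powerset] at this
          have h2 := this.2.2
          rwa [Finset.image_image] at h2
        · intro v hvH
          simp [hz v hvH]
      refine ⟨(fun v => (Nat.unpair (f v)).1, fun v => (Nat.unpair (f v)).2),
        Set.mem_prod.2 ⟨h1, h2⟩, ?_⟩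
      funext v
      simp [Nat.pair_unpair]
    · rintro ⟨⟨f₁, f₂⟩, hmem, rfl⟩
      obtain ⟨⟨⟨h1v, h1e⟩, h1z⟩, ⟨⟨h2v, h2e⟩, h2z⟩⟩ := Set.mem_prod.1 hmem
      refine ⟨⟨?_, ?_⟩, ?_⟩
      · intro v hvH
        simp only [tensor, Finset.mem_image]
        exact ⟨(f₁ v, f₂ v), Finset.mem_product.2 ⟨h1v v hvH, h2v v hvH⟩, rfl⟩
      · intro e heH
        simp only [tensor, Finset.mem_filter, Finset.mem_powerset]
        refine ⟨?_, ?_, ?_⟩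
        · intro m hm
          simp only [Finset.mem_image] at hm
          obtain ⟨v, hv, rfl⟩ := hm
          have hvH := (hH e heH).1 hv
          simp only [Finset.mem_image]
          exact ⟨(f₁ v, f₂ v), Finset.mem_product.2 ⟨h1v v hvH, h2v v hvH⟩, rfl⟩
        · rw [Finset.image_image]
          convert h1e e heH using 2
          funext v
          simp
        · rw [Finset.image_image]
          convert h2e e heH using 2
          funext v
          simp
      · intro v hvH
        have a1 : f₁ v = 0 := h1z v hvH
        have a2 : f₂ v = 0 := h2z v hvH
        simp only [a1, a2]
        rfl
  rw [key, Set.ncard_image_of_injective]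
  intro p q hpq
  have hpt : ∀ v, Nat.pair (p.1 v) (p.2 v) = Nat.pair (q.1 v) (q.2 v) := fun v => congrFun hpq v
  have e1 : p.1 = q.1 := funext fun v => (Nat.pair_eq_pair.1 (hpt v)).1
  have e2 : p.2 = q.2 := funext fun v => (Nat.pair_eq_pair.1 (hpt v)).2
  exact Prod.ext e1 e2

/-- Homomorphisms from `H` onto the whole vertex set of `G`. -/
def surSet (G H : HGraph) : Set (ℕ → ℕ) :=
  {f ∈ homSet G H | H.verts.image f = G.verts}

def surCount (G H : HGraph) : ℕ := (surSet G H).ncard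

lemma surSet_finite (G H : HGraph) : (surSet G H).Finite :=
  (homSet_finite G H).subset fun _ hf => hf.1

lemma induce_good {G : HGraph} (hG : G.Good) (S : Finset ℕ) : (G.induce S).Good := by
  intro e he
  simp only [HGraph.induce, Finset.mem_filter] at he
  exact ⟨Finset.subset_inter (hG e he.1).1 he.2, (hG e he.1).2⟩

lemma induce_self {G : HGraph} (hG : G.Good) : G.induce G.verts = G := by
  have h1 : G.verts ∩ G.verts = G.verts := Finset.inter_self _
  have h2 : G.edges.filter (fun e => e ⊆ G.verts) = G.edges :=
    Finset.filter_true_of_mem fun e he => (hG e he).1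
  simp only [HGraph.induce, h1, h2]

lemma surSet_induce {G H : HGraph} (hH : H.Good) {S : Finset ℕ} (hS : S ⊆ G.verts) :
    surSet (G.induce S) H = {f ∈ homSet G H | H.verts.image f = S} := by
  have hverts : (G.induce S).verts = S := Finset.inter_eq_right.2 hS
  ext f
  simp only [surSet, Set.mem_setOf_eq, hverts]
  constructor
  · rintro ⟨⟨⟨hv, he⟩, hz⟩, him⟩
    refine ⟨⟨⟨fun v hvH => ?_, fun e heH => ?_⟩, hz⟩, him⟩
    · exact hS (hverts ▸ hv v hvH)
    · exact Finset.mem_of_mem_filter _ (he e heH)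
  · rintro ⟨⟨⟨hv, he⟩, hz⟩, him⟩
    refine ⟨⟨⟨fun v hvH => ?_, fun e heH => ?_⟩, hz⟩, him⟩
    · rw [hverts, ← him]; exact Finset.mem_image_of_mem f hvH
    · simp only [HGraph.induce, Finset.mem_filter]
      refine ⟨he e heH, ?_⟩
      rw [← him]
      exact Finset.image_subset_image (hH e heH).1
  
lemma homCount_eq_sum_sur (G H : HGraph) (hH : H.Good) :
    homCount G H = ∑ S ∈ G.verts.powerset, surCount (G.induce S) H := by
  classical
  set T := (homSet_finite G H).toFinset with hT
  have hcard : homCount G H = T.card := by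
    rw [homCount_eq, ← Set.ncard_coe_finset, hT, Set.Finite.coe_toFinset]
  rw [hcard]
  rw [Finset.card_eq_sum_card_fiberwise (f := fun f => H.verts.image f)
    (t := G.verts.powerset) ?_]
  · refine Finset.sum_congr rfl fun S hS => ?_
    rw [Finset.mem_powerset] at hS
    have : surSet (G.induce S) H = ↑(T.filter fun f => H.verts.image f = S) := by
      rw [surSet_induce hH hS]
      ext f
      simp only [Finset.coe_filter, Set.mem_setOf_eq, hT, Set.Finite.mem_toFinset]
    rw [surCount, this, Set.ncard_coe_finset]
  · intro f hf
    rw [hT, Finset.mem_coe, Set.Finite.mem_toFinset] at hf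
    rw [Finset.mem_coe, Finset.mem_powerset, Finset.image_subset_iff]
    exact fun v hv => hf.1.1 v hv

lemma sur_eq_of_hom_eq {H₁ H₂ : HGraph} (h₁ : H₁.Good) (h₂ : H₂.Good)
    (hyp : ∀ G : HGraph, G.Good → homCount G H₁ = homCount G H₂) :
    ∀ G : HGraph, G.Good → surCount G H₁ = surCount G H₂ := by
  have main : ∀ n : ℕ, ∀ G : HGraph, G.Good → G.verts.card < n →
      surCount G H₁ = surCount G H₂ := by
    intro n
    induction n with
    | zero => intro G _ h; omega
    | succ n ih =>
      intro G hG hcard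
      have key : ∀ Hh : HGraph, Hh.Good → homCount G Hh = surCount G Hh +
          ∑ S ∈ G.verts.powerset.erase G.verts, surCount (G.induce S) Hh := by
        intro Hh hHh
        rw [homCount_eq_sum_sur G Hh hHh,
          ← Finset.add_sum_erase _ _ (Finset.mem_powerset_self G.verts), induce_self hG]
      have hsum : ∑ S ∈ G.verts.powerset.erase G.verts, surCount (G.induce S) H₁ =
          ∑ S ∈ G.verts.powerset.erase G.verts, surCount (G.induce S) H₂ := by
        refine Finset.sum_congr rfl fun S hS => ?_
        rw [Finset.mem_erase, Finset.mem_powerset] at hS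
        have hssub : S ⊂ G.verts := hS.2.ssubset_of_ne hS.1
        have hclt : S.card < G.verts.card := Finset.card_lt_card hssub
        have hv : (G.induce S).verts = S := Finset.inter_eq_right.2 hS.2
        refine ih (G.induce S) (induce_good hG S) ?_
        rw [hv]; omega
      have e1 := key H₁ h₁
      have e2 := key H₂ h₂
      have e3 := hyp G hG
      rw [e1, e2, hsum] at e3
      exact Nat.add_right_cancel e3
  intro G hG
  exact main (G.verts.card + 1) G hG (Nat.lt_succ_self _)

/-- The normalized identity map. -/
def idFun (H : HGraph) : ℕ → ℕ := fun v => if v ∈ H.verts then v else 0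

lemma idFun_mem_surSet {H : HGraph} (hH : H.Good) : idFun H ∈ surSet H H := by
  have himg : ∀ e : Finset ℕ, e ⊆ H.verts → e.image (idFun H) = e := by
    intro e he
    have : e.image (idFun H) = e.image id := by
      apply Finset.image_congr
      intro v hv
      simp [idFun, he hv]
    rw [this, Finset.image_id]
  refine ⟨⟨⟨fun v hv => ?_, fun e he => ?_⟩, fun v hv => ?_⟩, ?_⟩
  · simpa [idFun, hv] using hv
  · rw [himg e (hH e he).1]; exact he
  · simp [idFun, hv]
  · rw [himg H.verts (subset_refl _)]

lemma surCount_self_pos {H : HGraph} (hH : H.Good) : 0 < surCount H H := by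
  rw [surCount, Set.ncard_pos (surSet_finite H H)]
  exact ⟨idFun H, idFun_mem_surSet hH⟩

lemma homCount_self_pos {H : HGraph} (hH : H.Good) : 0 < homCount H H := by
  rw [homCount_eq, Set.ncard_pos (homSet_finite H H)]
  exact ⟨idFun H, (idFun_mem_surSet hH).1⟩

lemma lovasz {H₁ H₂ : HGraph} (h₁ : H₁.Good) (h₂ : H₂.Good)
    (hyp : ∀ G : HGraph, G.Good → homCount G H₁ = homCount G H₂) :
    Isomorphic H₁ H₂ := by
  have hsur := sur_eq_of_hom_eq h₁ h₂ hyp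
  -- a surjective hom f : H₂ → H₁
  have hf : ∃ f, f ∈ surSet H₁ H₂ := by
    have : 0 < surCount H₁ H₂ := by rw [← hsur H₁ h₁]; exact surCount_self_pos h₁
    rw [surCount, Set.ncard_pos (surSet_finite H₁ H₂)] at this
    exact this
  have hg : ∃ g, g ∈ surSet H₂ H₁ := by
    have : 0 < surCount H₂ H₁ := by rw [hsur H₂ h₂]; exact surCount_self_pos h₂
    rw [surCount, Set.ncard_pos (surSet_finite H₂ H₁)] at this
    exact this
  obtain ⟨f, ⟨⟨hfv, hfe⟩, hfz⟩, hfim⟩ := hf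
  obtain ⟨g, ⟨⟨hgv, hge⟩, hgz⟩, hgim⟩ := hg
  -- vertex counts coincide
  have hc1 : H₁.verts.card ≤ H₂.verts.card := by
    calc H₁.verts.card = (H₂.verts.image f).card := by rw [hfim]
    _ ≤ H₂.verts.card := Finset.card_image_le
  have hc2 : H₂.verts.card ≤ H₁.verts.card := by
    calc H₂.verts.card = (H₁.verts.image g).card := by rw [hgim]
    _ ≤ H₁.verts.card := Finset.card_image_le
  have hcards : H₁.verts.card = H₂.verts.card := le_antisymm hc1 hc2
  -- g injective on H₁.verts
  have hginj : Set.InjOn g ↑H₁.verts := by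
    apply Finset.injOn_of_card_image_eq
    rw [hgim, hcards]
  have hfinj : Set.InjOn f ↑H₂.verts := by
    apply Finset.injOn_of_card_image_eq
    rw [hfim, hcards]
  -- the edge image maps are injective
  have edgeInj : ∀ (H H' : HGraph) (φ : ℕ → ℕ), H.Good → Set.InjOn φ ↑H.verts →
      (∀ e ∈ H.edges, e.image φ ∈ H'.edges) →
      Set.InjOn (fun e : Finset ℕ => e.image φ) ↑H.edges := by
    intro H H' φ hH hinj _ e he e' he' heq
    simp only [Finset.mem_coe] at he he'
    have hsub : ∀ a b : Finset ℕ, a ∈ H.edges → b ∈ H.edges →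
        a.image φ = b.image φ → a ⊆ b := by
      intro a b ha hb hab v hv
      have : φ v ∈ b.image φ := by rw [← hab]; exact Finset.mem_image_of_mem φ hv
      obtain ⟨v', hv', hvv'⟩ := Finset.mem_image.1 this
      have : v' = v := hinj ((hH b hb).1 hv') ((hH a ha).1 hv) hvv'
      rwa [← this]
    exact le_antisymm (hsub e e' he he' heq) (hsub e' e he' he heq.symm)
  -- edge counts coincide
  have hec1 : H₁.edges.card ≤ H₂.edges.card :=
    Finset.card_le_card_of_injOn _ (fun e he => hge e he) (edgeInj H₁ H₂ g h₁ hginj hge)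
  have hec2 : H₂.edges.card ≤ H₁.edges.card :=
    Finset.card_le_card_of_injOn _ (fun e he => hfe e he) (edgeInj H₂ H₁ f h₂ hfinj hfe)
  -- conclude
  refine ⟨g, ⟨fun v hv => ?_, hginj, ?_⟩, ?_⟩
  · have : g v ∈ H₁.verts.image g := Finset.mem_image_of_mem g (by exact_mod_cast hv)
    rw [hgim] at this
    exact_mod_cast this
  · intro v hv
    simp only [Finset.mem_coe] at hv
    have : v ∈ H₁.verts.image g := by rw [hgim]; exact_mod_cast hv
    obtain ⟨u, hu, huv⟩ := Finset.mem_image.1 this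
    exact ⟨u, by exact_mod_cast hu, huv⟩
  · refine (Finset.eq_of_subset_of_card_le ?_ ?_).symm
    · intro e' he'
      obtain ⟨e, he, rfl⟩ := Finset.mem_image.1 he'
      exact hge e he
    · rw [Finset.card_image_of_injOn (edgeInj H₁ H₂ g h₁ hginj hge)]
      exact hec2

/-- Independence of the multiplicative functionals `G ↦ Hom(G, Hs i)`. -/
lemma char_indep {k : ℕ} (Hs : Fin k → HGraph) (hHs : ∀ i, (Hs i).Good)
    (hdist : ∀ i j, i ≠ j → ∃ Fs : HGraph, Fs.Good ∧
      homCount Fs (Hs i) ≠ homCount Fs (Hs j)) :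
    ∀ a : Fin k → ℚ,
      (∀ Fs : HGraph, Fs.Good → ∑ i, a i * (homCount Fs (Hs i) : ℚ) = 0) → a = 0 := by
  have main : ∀ n : ℕ, ∀ a : Fin k → ℚ,
      (Finset.univ.filter fun i => a i ≠ 0).card ≤ n →
      (∀ Fs : HGraph, Fs.Good → ∑ i, a i * (homCount Fs (Hs i) : ℚ) = 0) → a = 0 := by
    intro n
    induction n with
    | zero =>
      intro a hcard _
      funext i
      by_contra h
      have : i ∈ Finset.univ.filter fun i => a i ≠ 0 :=
        Finset.mem_filter.2 ⟨Finset.mem_univ i, h⟩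
      have := Finset.card_pos.2 ⟨i, this⟩
      omega
    | succ n ih =>
      intro a hcard hyp
      by_contra hne
      obtain ⟨i₁, hi₁⟩ : ∃ i, a i ≠ 0 := by
        by_contra h
        push_neg at h
        exact hne (funext h)
      by_cases hsing : ∀ i, i ≠ i₁ → a i = 0
      · have h0 := hyp (Hs i₁) (hHs i₁)
        rw [Finset.sum_eq_single i₁ (fun i _ hne' => by rw [hsing i hne', zero_mul])
          (fun h => absurd (Finset.mem_univ i₁) h)] at h0
        have hpos : (0 : ℚ) < (homCount (Hs i₁) (Hs i₁) : ℚ) := by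
          exact_mod_cast homCount_self_pos (hHs i₁)
        exact hi₁ (by
          rcases mul_eq_zero.1 h0 with h | h
          · exact h
          · exact absurd h hpos.ne')
      · push_neg at hsing
        obtain ⟨i₀, hi₀ne, hi₀⟩ := hsing
        obtain ⟨Fst, hFstG, hFstne⟩ := hdist i₀ i₁ hi₀ne
        set b : Fin k → ℚ :=
          fun i => a i * ((homCount Fst (Hs i) : ℚ) - (homCount Fst (Hs i₁) : ℚ)) with hb
        have hbrel : ∀ Fs : HGraph, Fs.Good →
            ∑ i, b i * (homCount Fs (Hs i) : ℚ) = 0 := by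
          intro Fs hFs
          have hper : ∀ i, b i * (homCount Fs (Hs i) : ℚ) =
              a i * (homCount (tensor Fs Fst) (Hs i) : ℚ) -
                (homCount Fst (Hs i₁) : ℚ) * (a i * (homCount Fs (Hs i) : ℚ)) := by
            intro i
            rw [homCount_tensor Fs Fst (Hs i) (hHs i)]
            push_cast
            ring
          rw [Finset.sum_congr rfl fun i _ => hper i, Finset.sum_sub_distrib,
            hyp (tensor Fs Fst) (tensor_good hFs hFstG), ← Finset.mul_sum,
            hyp Fs hFs, mul_zero, sub_zero]
        have hsupp : (Finset.univ.filter fun i => b i ≠ 0).card ≤ n := by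
          have hsub : (Finset.univ.filter fun i => b i ≠ 0) ⊆
              (Finset.univ.filter fun i => a i ≠ 0).erase i₁ := by
            intro i hi
            rw [Finset.mem_filter] at hi
            rw [Finset.mem_erase, Finset.mem_filter]
            refine ⟨?_, Finset.mem_univ i, fun h => hi.2 (by rw [hb]; simp [h])⟩
            rintro rfl
            exact hi.2 (by rw [hb]; simp)
          have h1 := Finset.card_le_card hsub
          have h2 : i₁ ∈ Finset.univ.filter fun i => a i ≠ 0 :=
            Finset.mem_filter.2 ⟨Finset.mem_univ _, hi₁⟩
          have h3 := Finset.card_erase_of_mem h2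
          have h4 := Finset.card_pos.2 ⟨i₁, h2⟩
          omega
        have hb0 := ih b hsupp hbrel
        have : b i₀ = 0 := congrFun hb0 i₀
        rw [hb] at this
        rcases mul_eq_zero.1 this with h | h
        · exact hi₀ h
        · exact hFstne (by exact_mod_cast sub_eq_zero.1 h)
  intro a hyp
  exact main ((Finset.univ.filter fun i => a i ≠ 0).card) a le_rfl hyp


theorem stmt18 (k : ℕ) (Hs : Fin k → HGraph) (hHs : ∀ i, (Hs i).Good)
    (hiso : ∀ i j, i ≠ j → ¬ Isomorphic (Hs i) (Hs j))
    (c : Fin k → ℚ) (hc : ∀ i, c i ≠ 0) :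
    ∃ (F : Fin k → HGraph) (M : Matrix (Fin k) (Fin k) ℚ),
      (∀ i, (F i).Good) ∧ IsUnit M ∧
      (∀ i j, M i j = c j * (homCount (F i) (Hs j) : ℚ)) ∧
      (∀ G : HGraph, G.Good → ∀ j,
        ∑ i, c i * (homCount (tensor G (F j)) (Hs i) : ℚ) =
          ∑ i, M j i * (homCount G (Hs i) : ℚ)) ∧
      ∀ G G' : HGraph, G.Good → G'.Good →
        (∀ j, ∑ i, c i * (homCount (tensor G (F j)) (Hs i) : ℚ) =
              ∑ i, c i * (homCount (tensor G' (F j)) (Hs i) : ℚ)) →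
        ∀ i, homCount G (Hs i) = homCount G' (Hs i) := by
  classical
  -- distinctness of the functionals
  have hdist : ∀ i j, i ≠ j → ∃ Fs : HGraph, Fs.Good ∧
      homCount Fs (Hs i) ≠ homCount Fs (Hs j) := by
    intro i j hij
    by_contra h
    push_neg at h
    exact hiso i j hij (lovasz (hHs i) (hHs j) fun G hG => h G hG)
  have indep := char_indep Hs hHs hdist
  -- the set of profile vectors
  set W : Set (Fin k → ℚ) :=
    {w | ∃ Fs : HGraph, Fs.Good ∧ w = fun i => (homCount Fs (Hs i) : ℚ)} with hW
  -- W spans everything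
  have hspan : Submodule.span ℚ W = ⊤ := by
    by_contra h
    obtain ⟨g, hg0, hker⟩ :=
      Submodule.exists_dual_map_eq_bot_of_lt_top (Ne.lt_top h) inferInstance
    set a : Fin k → ℚ := fun i => g fun j => if i = j then 1 else 0 with ha
    have hgw : ∀ w : Fin k → ℚ, g w = ∑ i, w i * a i := by
      intro w
      rw [LinearMap.pi_apply_eq_sum_univ g w]
      simp [ha, smul_eq_mul]
    have hvan : ∀ Fs : HGraph, Fs.Good →
        ∑ i, a i * (homCount Fs (Hs i) : ℚ) = 0 := by
      intro Fs hFs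
      have hmem : (fun i => (homCount Fs (Hs i) : ℚ)) ∈ Submodule.span ℚ W :=
        Submodule.subset_span ⟨Fs, hFs, rfl⟩
      have : g (fun i => (homCount Fs (Hs i) : ℚ)) = 0 := by
        have := Submodule.mem_map_of_mem (f := g) hmem
        rw [hker] at this
        exact (Submodule.mem_bot ℚ).1 this
      rw [hgw] at this
      rw [← this]
      exact Finset.sum_congr rfl fun i _ => mul_comm _ _
    have := indep a hvan
    apply hg0
    apply LinearMap.ext
    intro w
    rw [hgw, this]
    simp
  -- extract a basis from W
  obtain ⟨s, hsW, hsspan, hsli⟩ := exists_linearIndependent ℚ W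
  rw [hspan] at hsspan
  have hstop : Submodule.span ℚ (Set.range ((↑) : s → (Fin k → ℚ))) = ⊤ := by
    rw [Subtype.range_coe]; exact hsspan
  let b : Module.Basis s ℚ (Fin k → ℚ) := Module.Basis.mk hsli (le_of_eq hstop.symm)
  haveI : Fintype s := FiniteDimensional.fintypeBasisIndex b
  have hcards : Fintype.card s = k := by
    have h1 := Module.finrank_eq_card_basis b
    rw [Module.finrank_pi] at h1
    simp at h1
    rw [← Nat.card_eq_fintype_card, Nat.card_coe_set_eq]
    omega
  let eqv : Fin k ≃ s := (Fintype.equivFinOfCardEq hcards).symm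
  let b' : Module.Basis (Fin k) ℚ (Fin k → ℚ) := b.reindex eqv.symm
  have hb' : ∀ j, b' j = ((eqv j : Fin k → ℚ)) := by
    intro j
    show b.reindex eqv.symm j = _
    rw [Module.Basis.reindex_apply]
    simp [b, Module.Basis.mk_apply]
  -- choose the hypergraphs
  have hFex : ∀ j, ∃ Fs : HGraph, Fs.Good ∧
      (eqv j : Fin k → ℚ) = fun i => (homCount Fs (Hs i) : ℚ) := fun j => hsW (eqv j).2
  choose F hFgood hFvec using hFex
  have hrow : ∀ j, b' j = fun i => (homCount (F j) (Hs i) : ℚ) := by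
    intro j; rw [hb', hFvec]
  -- the matrix A of profiles, and M
  set A : Matrix (Fin k) (Fin k) ℚ := Matrix.of fun j i => (homCount (F j) (Hs i) : ℚ) with hA
  have hAunit : IsUnit A := by
    have h1 : (Pi.basisFun ℚ (Fin k)).toMatrix b' = A.transpose := by
      ext i j
      rw [Module.Basis.toMatrix_apply, Pi.basisFun_repr, hrow j]
      rfl
    have : Invertible ((Pi.basisFun ℚ (Fin k)).toMatrix b') :=
      (Pi.basisFun ℚ (Fin k)).invertibleToMatrix b'
    have h2 : IsUnit A.transpose := by
      rw [← h1]
      exact isUnit_of_invertible _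
    rw [Matrix.isUnit_iff_isUnit_det] at h2 ⊢
    rwa [Matrix.det_transpose] at h2
  set M : Matrix (Fin k) (Fin k) ℚ := Matrix.of fun j i => c i * A j i with hM
  have hMunit : IsUnit M := by
    have hDunit : IsUnit (Matrix.diagonal c) := by
      rw [Matrix.isUnit_iff_isUnit_det, Matrix.det_diagonal]
      exact (Finset.prod_ne_zero_iff.2 fun i _ => hc i).isUnit
    have : M = A * Matrix.diagonal c := by
      ext j i
      rw [Matrix.mul_diagonal]
      simp [hM, mul_comm]
    rw [this]
    exact hAunit.mul hDunit
  -- the key identity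
  have hkey : ∀ G : HGraph, G.Good → ∀ j,
      ∑ i, c i * (homCount (tensor G (F j)) (Hs i) : ℚ) =
        ∑ i, M j i * (homCount G (Hs i) : ℚ) := by
    intro G hG j
    refine Finset.sum_congr rfl fun i _ => ?_
    rw [homCount_tensor G (F j) (Hs i) (hHs i)]
    push_cast
    show c i * ((homCount G (Hs i) : ℚ) * (homCount (F j) (Hs i) : ℚ)) =
      c i * (homCount (F j) (Hs i) : ℚ) * (homCount G (Hs i) : ℚ)
    ring
  refine ⟨F, M, hFgood, hMunit, fun i j => rfl, hkey, ?_⟩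
  -- uniqueness
  intro G G' hG hG' heq i
  set d : Fin k → ℚ := fun i => (homCount G (Hs i) : ℚ) - (homCount G' (Hs i) : ℚ) with hd
  have hMd : M.mulVec d = 0 := by
    funext j
    have h1 := hkey G hG j
    have h2 := hkey G' hG' j
    have h3 := heq j
    show ∑ i, M j i * d i = 0
    have : ∑ i, M j i * d i =
        (∑ i, M j i * (homCount G (Hs i) : ℚ)) - ∑ i, M j i * (homCount G' (Hs i) : ℚ) := by
      rw [← Finset.sum_sub_distrib]
      exact Finset.sum_congr rfl fun i _ => by rw [hd]; ring
    rw [this, ← h1, ← h2, h3, sub_self]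
  obtain ⟨B, hB1, hB2⟩ := isUnit_iff_exists.1 hMunit
  have hd0 : d = 0 := by
    calc d = (1 : Matrix (Fin k) (Fin k) ℚ).mulVec d := by rw [Matrix.one_mulVec]
    _ = (B * M).mulVec d := by rw [hB2]
    _ = B.mulVec (M.mulVec d) := by rw [Matrix.mulVec_mulVec]
    _ = B.mulVec 0 := by rw [hMd]
    _ = 0 := Matrix.mulVec_zero B
  have : d i = 0 := congrFun hd0 i
  rw [hd] at this
  have := sub_eq_zero.1 this
  exact_mod_cast this


end
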